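/- arXiv:1309.2109 — 7 statements merged into one kernel-verified Lean document; each statement's English description precedes it below -/
import Mathlib

section
/- For all n ≥ 0, the Daehee numbers satisfy D_n = ∑_{l=0}^{n} s(n,l) B_l, where s(n,l) are the (signed) Stirling numbers of the first kind and B_l are the Bernoulli numbers. -/
open PowerSeries Finset

noncomputable def logOneAdd : PowerSeries ℚ :=
  PowerSeries.mk fun k => if k = 0 then 0 else (-1 : ℚ)^(k+1) / k

noncomputable def onePow (x : ℚ) : PowerSeries ℚ :=
  PowerSeries.mk fun k => (∏ i ∈ Finset.range k, (x - (i : ℚ))) / (Nat.factorial k : ℚ)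

noncomputable def expX (x : ℚ) : PowerSeries ℚ :=
  PowerSeries.mk fun k => x ^ k / (Nat.factorial k : ℚ)

private noncomputable def Pfall (m : ℕ) : Polynomial ℚ :=
  ∏ i ∈ Finset.range m, (Polynomial.X - Polynomial.C (i : ℚ))

private lemma Pfall_natDegree (m : ℕ) : (Pfall m).natDegree = m := by
  rw [Pfall, Polynomial.natDegree_prod_of_monic]
  · exact (Finset.sum_congr rfl fun i _ => Polynomial.natDegree_X_sub_C _).trans (by simp)
  · intro i _; exact Polynomial.monic_X_sub_C _

private lemma neg_prod_fact (n : ℕ) :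
    ∏ i ∈ Finset.range n, (-((i : ℚ) + 1)) = (-1) ^ n * (Nat.factorial n : ℚ) := by
  induction n with
  | zero => simp
  | succ n ih =>
    rw [Finset.prod_range_succ, ih, Nat.factorial_succ]
    push_cast
    ring

private lemma Pfall_coeff_one (n : ℕ) :
    (Pfall (n + 1)).coeff 1 = (-1) ^ n * (Nat.factorial n : ℚ) := by
  rw [Pfall, Finset.prod_range_succ']
  simp only [Nat.cast_zero, map_zero, sub_zero]
  rw [Polynomial.coeff_mul_X, Polynomial.coeff_zero_eq_eval_zero, Polynomial.eval_prod]
  simp only [Polynomial.eval_sub, Polynomial.eval_X, Polynomial.eval_C]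
  rw [← neg_prod_fact n]
  apply Finset.prod_congr rfl
  intro i _
  push_cast
  ring

private lemma Pfall_comp (n : ℕ) :
    (Pfall (n + 1)).comp (Polynomial.X + 1) = Pfall (n + 1) + Polynomial.C ((n : ℚ) + 1) * Pfall n := by
  apply Polynomial.funext
  intro x
  simp only [Polynomial.eval_comp, Polynomial.eval_add, Polynomial.eval_mul, Polynomial.eval_X,
    Polynomial.eval_one, Polynomial.eval_C, Pfall, Polynomial.eval_prod, Polynomial.eval_sub]
  have h1 : ∏ i ∈ Finset.range (n + 1), (x + 1 - (i : ℚ)) =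
      (∏ i ∈ Finset.range n, (x - (i : ℚ))) * (x + 1) := by
    rw [Finset.prod_range_succ']
    simp only [Nat.cast_zero, sub_zero]
    congr 1
    apply Finset.prod_congr rfl
    intro i _
    push_cast
    ring
  rw [h1, Finset.prod_range_succ]
  ring

private lemma aux_main (n : ℕ) :
    ∑ l ∈ Finset.range (n + 1), (Pfall n).coeff l * _root_.bernoulli l
      = (-1) ^ n * (Nat.factorial n : ℚ) / ((n : ℚ) + 1) := by
  set a : ℕ → ℚ := fun l => (Pfall (n + 1)).coeff l with ha
  have hdeg : (Pfall (n + 1)).natDegree < n + 2 := by rw [Pfall_natDegree]; omega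
  have hsum : Pfall (n + 1) = ∑ l ∈ Finset.range (n + 2), Polynomial.C (a l) * Polynomial.X ^ l := by
    conv_lhs => rw [(Pfall (n + 1)).as_sum_range' (n + 2) hdeg]
    exact Finset.sum_congr rfl fun l _ => (Polynomial.C_mul_X_pow_eq_monomial).symm
  -- Way 2 : via binomial expansion of comp (X+1)
  have hway2 : ∑ j ∈ Finset.range (n + 2), ((Pfall (n + 1)).comp (Polynomial.X + 1)).coeff j * _root_.bernoulli j
      = (∑ j ∈ Finset.range (n + 2), a j * _root_.bernoulli j) + a 1 := by
    have hcomp : (Pfall (n + 1)).comp (Polynomial.X + 1) =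
        ∑ l ∈ Finset.range (n + 2), Polynomial.C (a l) * (Polynomial.X + 1) ^ l := by
      conv_lhs => rw [hsum]
      rw [Polynomial.comp, Polynomial.eval₂_finset_sum]
      apply Finset.sum_congr rfl
      intro l _
      simp [Polynomial.eval₂_mul, Polynomial.eval₂_C, Polynomial.eval₂_X_pow]
    rw [hcomp]
    have hcoeff : ∀ j, (∑ l ∈ Finset.range (n + 2), Polynomial.C (a l) * (Polynomial.X + 1) ^ l).coeff j
        = ∑ l ∈ Finset.range (n + 2), a l * ((l.choose j : ℚ)) := by
      intro j
      rw [Polynomial.finset_sum_coeff]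
      apply Finset.sum_congr rfl
      intro l _
      rw [Polynomial.coeff_C_mul, Polynomial.coeff_X_add_one_pow]
    calc ∑ j ∈ Finset.range (n + 2), (∑ l ∈ Finset.range (n + 2), Polynomial.C (a l) * (Polynomial.X + 1) ^ l).coeff j * _root_.bernoulli j
        = ∑ j ∈ Finset.range (n + 2), (∑ l ∈ Finset.range (n + 2), a l * (l.choose j : ℚ)) * _root_.bernoulli j := by
          apply Finset.sum_congr rfl; intro j _; rw [hcoeff]
      _ = ∑ l ∈ Finset.range (n + 2), a l * (∑ j ∈ Finset.range (n + 2), (l.choose j : ℚ) * _root_.bernoulli j) := by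
          simp only [Finset.sum_mul]
          rw [Finset.sum_comm]
          apply Finset.sum_congr rfl; intro l _
          rw [Finset.mul_sum]
          apply Finset.sum_congr rfl; intro j _
          ring
      _ = ∑ l ∈ Finset.range (n + 2), a l * ((if l = 1 then (1:ℚ) else 0) + _root_.bernoulli l) := by
          apply Finset.sum_congr rfl; intro l hl
          congr 1
          rw [Finset.mem_range] at hl
          have hsub : Finset.range (l + 1) ⊆ Finset.range (n + 2) :=
            Finset.range_subset_range.mpr (by omega)
          rw [← Finset.sum_subset hsub (by
            intro j _ hj
            rw [Finset.mem_range, not_lt] at hj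
            rw [Nat.choose_eq_zero_of_lt (by omega)]
            simp)]
          rw [Finset.sum_range_succ, _root_.sum_bernoulli, Nat.choose_self]
          simp
      _ = (∑ j ∈ Finset.range (n + 2), a j * _root_.bernoulli j) + a 1 := by
          simp only [mul_add, mul_ite, mul_one, mul_zero]
          rw [Finset.sum_add_distrib, Finset.sum_ite_eq' (Finset.range (n+2)) 1 a]
          simp [add_comm]
  have hway1 : ∑ j ∈ Finset.range (n + 2), ((Pfall (n + 1)).comp (Polynomial.X + 1)).coeff j * _root_.bernoulli j
      = (∑ j ∈ Finset.range (n + 2), a j * _root_.bernoulli j)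
        + ((n : ℚ) + 1) * ∑ j ∈ Finset.range (n + 2), (Pfall n).coeff j * _root_.bernoulli j := by
    rw [Pfall_comp, Finset.mul_sum, ← Finset.sum_add_distrib]
    apply Finset.sum_congr rfl
    intro j _
    simp only [Polynomial.coeff_add, Polynomial.coeff_C_mul]
    ring
  have key : ((n : ℚ) + 1) * ∑ j ∈ Finset.range (n + 2), (Pfall n).coeff j * _root_.bernoulli j = a 1 := by
    have h := hway1.symm.trans hway2
    linarith
  have h0 : (Pfall n).coeff (n + 1) = 0 :=
    Polynomial.coeff_eq_zero_of_natDegree_lt (by rw [Pfall_natDegree]; omega)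
  rw [Finset.sum_range_succ, h0, zero_mul, add_zero] at key
  have hne : ((n : ℚ) + 1) ≠ 0 := by positivity
  rw [eq_div_iff hne]
  rw [ha] at key
  simp only [] at key
  rw [Pfall_coeff_one] at key
  linarith

theorem daehee_stirling_bernoulli (D B : ℕ → ℚ) (s : ℕ → ℕ → ℚ)
    (hD : PowerSeries.mk (fun n => D n / (Nat.factorial n : ℚ)) * PowerSeries.X = logOneAdd) (hB : PowerSeries.mk (fun l => B l / (Nat.factorial l : ℚ)) * (PowerSeries.exp ℚ - 1) = PowerSeries.X) (hs : ∀ (n : ℕ) (x : ℚ), ∏ i ∈ Finset.range n, (x - (i : ℚ)) = ∑ l ∈ Finset.range (n + 1), s n l * x ^ l) :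
    ∀ n : ℕ, D n = ∑ l ∈ Finset.range (n + 1), s n l * B l := by
  have hBl : ∀ l, B l = _root_.bernoulli l := by
    have hne : (PowerSeries.exp ℚ - 1) ≠ 0 := by
      intro h
      have h1 := congrArg (PowerSeries.coeff (R := ℚ) 1) h
      simp [PowerSeries.coeff_exp] at h1
    have heq : PowerSeries.mk (fun l => B l / (Nat.factorial l : ℚ)) = bernoulliPowerSeries ℚ :=
      mul_right_cancel₀ hne (hB.trans (bernoulliPowerSeries_mul_exp_sub_one ℚ).symm)
    intro l
    have h2 := congrArg (PowerSeries.coeff (R := ℚ) l) heq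
    have hf : ((Nat.factorial l : ℚ)) ≠ 0 := Nat.cast_ne_zero.mpr (Nat.factorial_ne_zero l)
    simp [bernoulliPowerSeries, PowerSeries.coeff_mk] at h2
    field_simp at h2
    exact h2
  have hDn : D = fun m => (-1 : ℚ) ^ m * (Nat.factorial m : ℚ) / ((m : ℚ) + 1) := by
    funext m
    have h1 := congrArg (PowerSeries.coeff (R := ℚ) (m + 1)) hD
    rw [PowerSeries.coeff_succ_mul_X] at h1
    simp only [logOneAdd, PowerSeries.coeff_mk, Nat.succ_ne_zero, if_false] at h1
    have hf : ((Nat.factorial m : ℚ)) ≠ 0 := Nat.cast_ne_zero.mpr (Nat.factorial_ne_zero m)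
    have hm1 : ((m : ℚ) + 1) ≠ 0 := by positivity
    rw [div_eq_div_iff hf (by push_cast; exact hm1)] at h1
    rw [eq_div_iff hm1]
    push_cast at h1
    rw [h1, pow_succ, pow_succ]
    ring
  intro n
  have hpoly : Pfall n = ∑ l ∈ Finset.range (n + 1), Polynomial.C (s n l) * Polynomial.X ^ l := by
    apply Polynomial.funext
    intro x
    rw [Polynomial.eval_finset_sum]
    simp only [Polynomial.eval_mul, Polynomial.eval_C, Polynomial.eval_pow, Polynomial.eval_X]
    rw [← hs n x]
    simp [Pfall, Polynomial.eval_prod]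
  have hsn : ∀ l ∈ Finset.range (n + 1), s n l = (Pfall n).coeff l := by
    intro l hl
    rw [hpoly, Polynomial.finset_sum_coeff]
    simp only [Polynomial.coeff_C_mul, Polynomial.coeff_X_pow, mul_ite, mul_one, mul_zero]
    rw [Finset.sum_ite_eq (Finset.range (n + 1)) l (fun k => s n k)]
    simp [hl]
  calc D n = (-1 : ℚ) ^ n * (Nat.factorial n : ℚ) / ((n : ℚ) + 1) := by rw [hDn]
    _ = ∑ l ∈ Finset.range (n + 1), (Pfall n).coeff l * _root_.bernoulli l := (aux_main n).symm
    _ = ∑ l ∈ Finset.range (n + 1), s n l * B l := by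
        apply Finset.sum_congr rfl
        intro l hl
        rw [hsn l hl, hBl l]
end

section
/- For all n ≥ 0, the Daehee polynomials satisfy D_n(x) = ∑_{l=0}^{n} s(n,l) B_l(x), where s(n,l) are the signed Stirling numbers of the first kind and B_l(x) are the Bernoulli polynomials. -/
open PowerSeries Finset

/-- coefficients of powers of `logOneAdd` -/
noncomputable def T (n m : ℕ) : ℚ := PowerSeries.coeff n (logOneAdd ^ m)

lemma constCoeff_logOneAdd : PowerSeries.constantCoeff logOneAdd = 0 := by
  have : PowerSeries.coeff 0 logOneAdd = 0 := by simp [logOneAdd]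
  simpa using this

lemma T_eq_zero {n m : ℕ} (h : n < m) : T n m = 0 := by
  obtain ⟨u, hu⟩ : (PowerSeries.X : PowerSeries ℚ)^m ∣ logOneAdd ^ m :=
    pow_dvd_pow_of_dvd (PowerSeries.X_dvd_iff.2 constCoeff_logOneAdd) m
  rw [T, hu, mul_comm, PowerSeries.coeff_mul_X_pow']
  simp [Nat.not_le_of_lt h, not_le_of_gt h]

/-- substitution of `logOneAdd` into a power series, defined coefficient-wise -/
noncomputable def phi (f : PowerSeries ℚ) : PowerSeries ℚ :=
  PowerSeries.mk fun n => ∑ m ∈ range (n+1), PowerSeries.coeff m f * T n m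

lemma coeff_phi (f : PowerSeries ℚ) (n N : ℕ) (h : n < N) :
    PowerSeries.coeff n (phi f) = ∑ m ∈ range N, PowerSeries.coeff m f * T n m := by
  rw [phi, PowerSeries.coeff_mk]
  apply Finset.sum_subset
  · intro m hm; simp only [mem_range] at *; omega
  · intro m hm hm2; simp only [mem_range, not_lt] at *
    rw [T_eq_zero (by omega), mul_zero]

lemma coeff_aeval (p : Polynomial ℚ) (n : ℕ) :
    PowerSeries.coeff n (Polynomial.aeval logOneAdd p) =
      ∑ m ∈ range (n+1), p.coeff m * T n m := by
  set N := max (p.natDegree + 1) (n + 1) with hN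
  rw [Polynomial.aeval_eq_sum_range' (n := N)
      (lt_of_lt_of_le (Nat.lt_succ_self _) (le_max_left _ _)) logOneAdd]
  rw [map_sum]
  simp only [PowerSeries.coeff_smul, smul_eq_mul]
  symm
  apply Finset.sum_subset
  · intro m hm; simp only [mem_range] at *
    exact lt_of_lt_of_le hm (le_max_right _ _)
  · intro m hm hm2; simp only [mem_range, not_lt] at hm hm2
    rw [T_eq_zero (by omega), mul_zero]

lemma phi_mul (f g : PowerSeries ℚ) : phi (f * g) = phi f * phi g := by
  ext n
  rw [phi, PowerSeries.coeff_mk]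
  have h1 : ∀ m ∈ range (n+1), PowerSeries.coeff m (f*g) * T n m
      = ((trunc (n+1) f) * (trunc (n+1) g)).coeff m * T n m := by
    intro m hm
    rw [PowerSeries.coeff_mul_eq_coeff_trunc_mul_trunc₂ f g (mem_range.1 hm) (mem_range.1 hm),
      ← Polynomial.coe_mul, Polynomial.coeff_coe]
  rw [Finset.sum_congr rfl h1, ← coeff_aeval, map_mul, PowerSeries.coeff_mul,
    PowerSeries.coeff_mul]
  apply Finset.sum_congr rfl
  intro p hp
  have hpn := Finset.HasAntidiagonal.mem_antidiagonal.1 hp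
  rw [coeff_aeval, coeff_aeval, coeff_phi f p.1 (p.1+1) (by omega),
    coeff_phi g p.2 (p.2+1) (by omega)]
  congr 1
  all_goals
    apply Finset.sum_congr rfl
    intro m hm
    rw [PowerSeries.coeff_trunc, if_pos (by have := mem_range.1 hm; omega)]

lemma phi_sub (f g : PowerSeries ℚ) : phi (f - g) = phi f - phi g := by
  ext n
  simp only [phi, PowerSeries.coeff_mk, map_sub, sub_mul, Finset.sum_sub_distrib]

lemma phi_one : phi 1 = 1 := by
  ext n
  rw [phi, PowerSeries.coeff_mk]
  simp only [PowerSeries.coeff_one, ite_mul, one_mul, zero_mul]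
  rw [Finset.sum_ite_eq' (range (n+1)) 0]
  simp [T, PowerSeries.coeff_one]

lemma phi_X : phi PowerSeries.X = logOneAdd := by
  ext n
  rw [phi, PowerSeries.coeff_mk]
  simp only [PowerSeries.coeff_X, ite_mul, one_mul, zero_mul]
  rw [Finset.sum_ite_eq' (range (n+1)) 1]
  rcases n with _ | n
  · simp [logOneAdd]
  · simp [T, pow_one]

lemma ode1 : (1 + PowerSeries.X) * (d⁄dX ℚ logOneAdd) = 1 := by
  ext n
  rw [add_mul, one_mul, map_add, mul_comm]
  rcases n with _ | n
  · simp [PowerSeries.coeff_derivative, logOneAdd]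
  · rw [PowerSeries.coeff_succ_mul_X, PowerSeries.coeff_derivative, PowerSeries.coeff_derivative,
      logOneAdd, PowerSeries.coeff_mk, PowerSeries.coeff_mk]
    simp only [Nat.succ_ne_zero, if_neg, PowerSeries.coeff_one]
    have h1 : ((n:ℚ)+1) ≠ 0 := by positivity
    have h2 : ((n:ℚ)+2) ≠ 0 := by positivity
    push_cast
    field_simp
    ring

lemma ode_pow (m : ℕ) :
    (1 + PowerSeries.X) * (d⁄dX ℚ (logOneAdd ^ (m+1))) = (m+1) • logOneAdd ^ m := by
  rw [Derivation.leibniz_pow]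
  simp only [Nat.add_sub_cancel, smul_eq_mul, nsmul_eq_mul]
  push_cast
  calc (1 + PowerSeries.X) * (((m:ℚ⟦X⟧)+1) * (logOneAdd ^ m * d⁄dX ℚ logOneAdd))
      = ((m:ℚ⟦X⟧)+1) * (logOneAdd ^ m * ((1 + PowerSeries.X) * d⁄dX ℚ logOneAdd)) := by ring
    _ = ((m:ℚ⟦X⟧)+1) * logOneAdd ^ m := by rw [ode1]; ring

lemma T_rec (n m : ℕ) :
    ((n:ℚ)+1) * T (n+1) (m+1) + n * T n (m+1) = ((m:ℚ)+1) * T n m := by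
  have h := congrArg (PowerSeries.coeff n) (ode_pow m)
  rw [add_mul, one_mul, map_add, mul_comm PowerSeries.X] at h
  rw [PowerSeries.coeff_derivative] at h
  rw [map_nsmul, nsmul_eq_mul] at h
  rcases n with _ | n
  · simpa [T, mul_comm] using h
  · rw [PowerSeries.coeff_succ_mul_X, PowerSeries.coeff_derivative] at h
    rw [show (T (n+1+1) (m+1)) = PowerSeries.coeff (n+1+1) (logOneAdd^(m+1)) from rfl]
    push_cast at h ⊢
    rw [show (T (n+1) (m+1)) = PowerSeries.coeff (n+1) (logOneAdd^(m+1)) from rfl,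
      show (T (n+1) m) = PowerSeries.coeff (n+1) (logOneAdd^m) from rfl]
    linarith [h]

noncomputable def Pn (n : ℕ) : Polynomial ℚ :=
  ∏ i ∈ range n, (Polynomial.X - Polynomial.C (i:ℚ))

noncomputable def sig (n l : ℕ) : ℚ := (Pn n).coeff l

lemma Pn_natDegree_le (n : ℕ) : (Pn n).natDegree ≤ n := by
  refine le_trans (Polynomial.natDegree_prod_le _ _) ?_
  refine le_trans (Finset.sum_le_sum fun i _ => le_of_eq (Polynomial.natDegree_X_sub_C _)) ?_
  simp

lemma sig_eq_zero {n l : ℕ} (h : n < l) : sig n l = 0 :=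
  Polynomial.coeff_eq_zero_of_natDegree_lt (lt_of_le_of_lt (Pn_natDegree_le n) h)

lemma sig_rec (n m : ℕ) : sig (n+1) (m+1) = sig n m - n * sig n (m+1) := by
  rw [sig, sig, sig, Pn, Finset.prod_range_succ, ← Pn, Polynomial.coeff_mul_X_sub_C]
  ring

lemma sig_zero_col (n : ℕ) : sig (n+1) 0 = 0 := by
  rw [sig, Polynomial.coeff_zero_eq_eval_zero, Pn, Polynomial.eval_prod]
  apply Finset.prod_eq_zero (Finset.mem_range.2 (Nat.succ_pos n))
  simp

lemma Tsig : ∀ n m : ℕ, (n.factorial : ℚ) * T n m = (m.factorial : ℚ) * sig n m := by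
  intro n
  induction n with
  | zero =>
    intro m
    rcases m with _ | m
    · simp [T, sig, Pn]
    · rw [T_eq_zero (Nat.succ_pos m), sig_eq_zero (Nat.succ_pos m), mul_zero, mul_zero]
  | succ n ih =>
    intro m
    rcases m with _ | m
    · have h1 : T (n+1) 0 = 0 := by simp [T]
      rw [h1, sig_zero_col, mul_zero, mul_zero]
    · have h2 := T_rec n m
      have h3 := ih m
      have h4 := ih (m+1)
      have h5 := sig_rec n m
      have hfn : ((n+1).factorial : ℚ) = ((n:ℚ)+1) * (n.factorial : ℚ) := by
        rw [Nat.factorial_succ]; push_cast; ring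
      have hfm : ((m+1).factorial : ℚ) = ((m:ℚ)+1) * (m.factorial : ℚ) := by
        rw [Nat.factorial_succ]; push_cast; ring
      rw [hfm] at h4
      rw [hfn, hfm, h5]
      linear_combination (n.factorial : ℚ) * h2 + ((m:ℚ)+1) * h3 - (n:ℚ) * h4

lemma eval_Pn (y : ℚ) (n : ℕ) : (Pn n).eval y = ∏ i ∈ range n, (y - (i:ℚ)) := by
  simp [Pn, Polynomial.eval_prod]

lemma phi_expX (y : ℚ) : phi (expX y) = onePow y := by
  ext n
  rw [phi, PowerSeries.coeff_mk, onePow, PowerSeries.coeff_mk, ← eval_Pn,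
    Polynomial.eval_eq_sum_range' (Nat.lt_succ_of_le (Pn_natDegree_le n)) y,
    Finset.sum_div]
  apply Finset.sum_congr rfl
  intro m hm
  rw [expX, PowerSeries.coeff_mk]
  have h1 : T n m = (m.factorial : ℚ) * sig n m / (n.factorial : ℚ) := by
    rw [← Tsig n m]
    field_simp [Nat.factorial_ne_zero]
  rw [h1, ← sig]
  have h2 : (m.factorial : ℚ) ≠ 0 := Nat.cast_ne_zero.2 (Nat.factorial_ne_zero m)
  field_simp

lemma exp_eq_expX_one : PowerSeries.exp ℚ = expX 1 := by
  ext n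
  rw [PowerSeries.coeff_exp, expX, PowerSeries.coeff_mk]
  simp

lemma onePow_one : onePow 1 = 1 + PowerSeries.X := by
  ext n
  rw [onePow, PowerSeries.coeff_mk]
  rcases n with _ | n
  · simp
  · rcases n with _ | n
    · simp [Finset.prod_range_succ]
    · rw [Finset.prod_eq_zero (Finset.mem_range.2 (show 1 < n+2 by omega)) (by norm_num)]
      simp [PowerSeries.coeff_X]

theorem daehee_poly_stirling_bernoulli (Dp : ℕ → ℚ → ℚ) (Bp : ℕ → ℚ → ℚ) (s : ℕ → ℕ → ℚ)
    (hDp : ∀ x : ℚ, PowerSeries.mk (fun n => Dp n x / (Nat.factorial n : ℚ)) * PowerSeries.X = logOneAdd * onePow x) (hBp : ∀ x : ℚ, PowerSeries.mk (fun m => Bp m x / (Nat.factorial m : ℚ)) * (PowerSeries.exp ℚ - 1) = PowerSeries.X * expX x) (hs : ∀ (n : ℕ) (x : ℚ), ∏ i ∈ Finset.range n, (x - (i : ℚ)) = ∑ l ∈ Finset.range (n + 1), s n l * x ^ l) :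
    ∀ (n : ℕ) (x : ℚ), Dp n x = ∑ l ∈ Finset.range (n + 1), s n l * Bp l x := by
  intro n x
  -- identify s with sig
  have hssig : ∀ N l, l < N + 1 → s N l = sig N l := by
    intro N l hl
    have hP : Pn N = ∑ l ∈ range (N+1), Polynomial.C (s N l) * Polynomial.X ^ l := by
      apply Polynomial.funext
      intro y
      rw [eval_Pn, hs N y]
      simp [Polynomial.eval_finset_sum]
    rw [sig, hP, Polynomial.finset_sum_coeff]
    simp only [Polynomial.coeff_C_mul, Polynomial.coeff_X_pow, mul_ite, mul_one, mul_zero]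
    rw [Finset.sum_ite_eq (range (N+1)) l, if_pos (mem_range.2 hl)]
  -- apply phi to the Bernoulli generating function identity
  have h1 := congrArg phi (hBp x)
  rw [phi_mul, phi_mul, exp_eq_expX_one, phi_sub, phi_one, phi_X, phi_expX, phi_expX,
    onePow_one, add_sub_cancel_left] at h1
  rw [← hDp x] at h1
  have h3 := congrArg (PowerSeries.coeff (n+1)) h1
  rw [PowerSeries.coeff_succ_mul_X, PowerSeries.coeff_succ_mul_X, coeff_phi _ n (n+1)
    (Nat.lt_succ_self n), PowerSeries.coeff_mk] at h3
  have hfn : (n.factorial : ℚ) ≠ 0 := Nat.cast_ne_zero.2 (Nat.factorial_ne_zero n)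
  have h4 : ∑ m ∈ range (n+1), PowerSeries.coeff m
      (PowerSeries.mk fun m => Bp m x / (Nat.factorial m : ℚ)) * T n m
      = (∑ l ∈ range (n+1), s n l * Bp l x) / (n.factorial : ℚ) := by
    rw [Finset.sum_div]
    apply Finset.sum_congr rfl
    intro m hm
    rw [PowerSeries.coeff_mk, hssig n m (mem_range.1 hm)]
    have hT : T n m = (m.factorial : ℚ) * sig n m / (n.factorial : ℚ) := by
      rw [← Tsig n m]; field_simp [Nat.factorial_ne_zero]
    have hfm : (m.factorial : ℚ) ≠ 0 := Nat.cast_ne_zero.2 (Nat.factorial_ne_zero m)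
    rw [hT]
    field_simp
  rw [h4] at h3
  field_simp at h3
  linarith [h3]
end

section
/- For all m ≥ 0, the Bernoulli numbers satisfy B_m = ∑_{n=0}^{m} D_n S(m,n), where D_n are the Daehee numbers and S(m,n) are the Stirling numbers of the second kind. -/
open PowerSeries Finset

noncomputable def Eser : PowerSeries ℚ := PowerSeries.exp ℚ - 1

lemma Eser_const : PowerSeries.constantCoeff Eser = 0 := by
  simp [Eser]

lemma coeff_Eser_pow_eq_zero {i n : ℕ} (h : i < n) :
    PowerSeries.coeff i (Eser ^ n) = 0 := by
  have hx : (PowerSeries.X : PowerSeries ℚ) ∣ Eser := PowerSeries.X_dvd_iff.mpr Eser_const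
  have : (PowerSeries.X : PowerSeries ℚ) ^ n ∣ Eser ^ n := pow_dvd_pow_of_dvd hx n
  exact PowerSeries.X_pow_dvd_iff.mp this i h

lemma derivExpQ : d⁄dX ℚ (PowerSeries.exp ℚ) = PowerSeries.exp ℚ := by
  ext n
  rw [PowerSeries.coeff_derivative]
  simp only [PowerSeries.coeff_exp, eq_ratCast, Rat.cast_eq_id, id_eq]
  rw [Nat.factorial_succ]
  push_cast
  have h1 : ((n : ℚ) + 1) ≠ 0 := by positivity
  have h2 : ((Nat.factorial n : ℚ)) ≠ 0 := by
    exact_mod_cast Nat.cast_ne_zero.mpr (Nat.factorial_ne_zero n)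
  field_simp

lemma deriv_Eser : d⁄dX ℚ Eser = 1 + Eser := by
  rw [Eser, map_sub, derivExpQ, Derivation.map_one_eq_zero]
  ring

noncomputable def Lser (k : ℕ) : PowerSeries ℚ :=
  ∑ n ∈ Finset.range (k + 1), PowerSeries.C ((-1 : ℚ) ^ n / (n + 1)) * Eser ^ (n + 1)

lemma deriv_Lser (k : ℕ) : d⁄dX ℚ (Lser k) = 1 - (-Eser) ^ (k + 1) := by
  have hterm : ∀ n : ℕ,
      d⁄dX ℚ (PowerSeries.C ((-1 : ℚ) ^ n / (n + 1)) * Eser ^ (n + 1))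
        = (-Eser) ^ n * (1 + Eser) := by
    intro n
    rw [Derivation.leibniz, Derivation.leibniz_pow, deriv_Eser, PowerSeries.derivative_C]
    simp only [smul_eq_mul, smul_zero, mul_zero, add_zero, Nat.add_sub_cancel, nsmul_eq_mul]
    have hne : ((n : ℚ) + 1) ≠ 0 := by positivity
    have hCn : (PowerSeries.C) ((-1 : ℚ) ^ n / (n + 1)) * (((n + 1 : ℕ) : PowerSeries ℚ))
        = (PowerSeries.C) ((-1 : ℚ) ^ n) := by
      rw [← map_natCast (PowerSeries.C) (n + 1), ← map_mul]
      congr 1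
      push_cast
      field_simp
    have hCpow : (PowerSeries.C) ((-1:ℚ) ^ n) = (-1 : PowerSeries ℚ) ^ n := by
      rw [map_pow, map_neg, map_one]
    rw [show (PowerSeries.C) ((-1:ℚ) ^ n / (↑n + 1)) *
          (((n + 1 : ℕ) : PowerSeries ℚ) * (Eser ^ n * (1 + Eser)))
        = ((PowerSeries.C) ((-1:ℚ) ^ n / (↑n + 1)) * ((n + 1 : ℕ) : PowerSeries ℚ)) *
          (Eser ^ n * (1 + Eser)) from by ring]
    rw [hCn, hCpow, neg_pow Eser n]
    ring
  rw [Lser, map_sum]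
  simp_rw [hterm]
  rw [← Finset.sum_mul]
  have := geom_sum_mul (-Eser) (k + 1)
  have h2 : (∑ i ∈ Finset.range (k + 1), (-Eser) ^ i) * (1 + Eser)
      = -((-Eser) ^ (k + 1) - 1) := by
    rw [← this]; ring
  rw [h2]; ring

lemma coeff_Lser (k : ℕ) :
    PowerSeries.coeff k (Lser k) = PowerSeries.coeff k PowerSeries.X := by
  cases k with
  | zero =>
    simp only [Lser, zero_add, Finset.sum_range_one, pow_zero, pow_one]
    rw [PowerSeries.coeff_C_mul]
    simp [PowerSeries.coeff_zero_eq_constantCoeff, Eser_const]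
  | succ j =>
    have hder := congrArg (PowerSeries.coeff j) (deriv_Lser (j + 1))
    rw [PowerSeries.coeff_derivative] at hder
    have hz : PowerSeries.coeff j ((-Eser) ^ (j + 1 + 1)) = 0 := by
      rw [neg_pow]
      have hCpow : ((-1 : PowerSeries ℚ)) ^ (j + 1 + 1)
          = (PowerSeries.C) ((-1:ℚ) ^ (j + 1 + 1)) := by
        rw [map_pow, map_neg, map_one]
      rw [hCpow, PowerSeries.coeff_C_mul, coeff_Eser_pow_eq_zero (by omega), mul_zero]
    rw [map_sub, hz, sub_zero] at hder
    have hj1 : ((j : ℚ) + 1) ≠ 0 := by positivity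
    cases j with
    | zero =>
      simp only [PowerSeries.coeff_one, PowerSeries.coeff_X] at hder ⊢
      norm_num at hder ⊢
      linarith
    | succ i =>
      simp only [PowerSeries.coeff_one, PowerSeries.coeff_X] at hder ⊢
      norm_num at hder ⊢
      rcases hder with h | h
      · exact h
      · exfalso
        have hi : (0:ℚ) ≤ (i:ℚ) := Nat.cast_nonneg i
        linarith

theorem bernoulli_daehee_stirling2 (D B : ℕ → ℚ) (S : ℕ → ℕ → ℚ)
    (hD : PowerSeries.mk (fun n => D n / (Nat.factorial n : ℚ)) * PowerSeries.X = logOneAdd) (hB : PowerSeries.mk (fun l => B l / (Nat.factorial l : ℚ)) * (PowerSeries.exp ℚ - 1) = PowerSeries.X) (hS : ∀ n : ℕ, (PowerSeries.exp ℚ - 1) ^ n = PowerSeries.C (Nat.factorial n : ℚ) * PowerSeries.mk (fun m => S m n / (Nat.factorial m : ℚ))) :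
    ∀ m : ℕ, B m = ∑ n ∈ Finset.range (m + 1), D n * S m n := by
  -- facts about D
  have hd : ∀ n : ℕ, D n / (Nat.factorial n : ℚ) = (-1 : ℚ) ^ n / (n + 1) := by
    intro n
    have := congrArg (PowerSeries.coeff (n + 1)) hD
    rw [PowerSeries.coeff_succ_mul_X, PowerSeries.coeff_mk] at this
    rw [this]
    simp only [logOneAdd, PowerSeries.coeff_mk, Nat.succ_ne_zero, if_false]
    push_cast
    rw [pow_succ, pow_succ]
    ring
  -- coefficients of Eser ^ n
  have hSc : ∀ n k : ℕ, PowerSeries.coeff k (Eser ^ n)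
      = (Nat.factorial n : ℚ) * (S k n / (Nat.factorial k : ℚ)) := by
    intro n k
    rw [Eser, hS n, PowerSeries.coeff_C_mul, PowerSeries.coeff_mk]
  have hSvanish : ∀ {k n : ℕ}, k < n → S k n = 0 := by
    intro k n h
    have h0 := hSc n k
    rw [coeff_Eser_pow_eq_zero h] at h0
    have hn : (Nat.factorial n : ℚ) ≠ 0 := by
      exact_mod_cast Nat.factorial_ne_zero n
    have hk : (Nat.factorial k : ℚ) ≠ 0 := by
      exact_mod_cast Nat.factorial_ne_zero k
    field_simp at h0
    have h0' : (Nat.factorial n : ℚ) * S k n = 0 := by linear_combination -h0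
    exact (mul_eq_zero.mp h0').resolve_left hn
  -- the composed series
  set F : PowerSeries ℚ := PowerSeries.mk
    (fun m => (∑ n ∈ Finset.range (m + 1), D n * S m n) / (Nat.factorial m : ℚ)) with hF
  -- partial sums
  have hcoeffF : ∀ k i : ℕ, i ≤ k →
      PowerSeries.coeff i F = PowerSeries.coeff i
        (∑ n ∈ Finset.range (k + 1),
          PowerSeries.C (D n / (Nat.factorial n : ℚ)) * Eser ^ n) := by
    intro k i hik
    rw [hF, PowerSeries.coeff_mk, map_sum]
    have hterm : ∀ n : ℕ,
        PowerSeries.coeff i (PowerSeries.C (D n / (Nat.factorial n : ℚ)) * Eser ^ n)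
          = D n * S i n / (Nat.factorial i : ℚ) := by
      intro n
      rw [PowerSeries.coeff_C_mul, hSc n i]
      have hn : (Nat.factorial n : ℚ) ≠ 0 := by
        exact_mod_cast Nat.factorial_ne_zero n
      field_simp
    simp_rw [hterm]
    rw [Finset.sum_div]
    apply Finset.sum_subset
    · intro x hx
      simp only [Finset.mem_range] at hx ⊢
      omega
    · intro x _ hx
      simp only [Finset.mem_range, not_lt] at hx
      rw [hSvanish (by omega)]
      simp
  -- F * Eser = X
  have hFE : F * Eser = PowerSeries.X := by
    ext k
    set P : PowerSeries ℚ := ∑ n ∈ Finset.range (k + 1),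
      PowerSeries.C (D n / (Nat.factorial n : ℚ)) * Eser ^ n with hP
    have h1 : PowerSeries.coeff k (F * Eser) = PowerSeries.coeff k (P * Eser) := by
      rw [PowerSeries.coeff_mul, PowerSeries.coeff_mul]
      apply Finset.sum_congr rfl
      intro p hp
      have : p.1 ≤ k := by
        have := Finset.HasAntidiagonal.antidiagonal.fst_le hp
        omega
      rw [hcoeffF k p.1 this]
    have h2 : P * Eser = Lser k := by
      rw [hP, Finset.sum_mul, Lser]
      apply Finset.sum_congr rfl
      intro n _
      rw [hd n, mul_assoc, ← pow_succ]
    rw [h1, h2, coeff_Lser]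
  -- cancel Eser
  have hEne : Eser ≠ 0 := by
    intro h
    have := congrArg (PowerSeries.coeff 1) h
    rw [Eser, map_sub] at this
    simp [PowerSeries.coeff_exp, PowerSeries.coeff_one] at this
  have hEdef : Eser = PowerSeries.exp ℚ - 1 := rfl
  have hBF : PowerSeries.mk (fun l => B l / (Nat.factorial l : ℚ)) = F := by
    apply mul_right_cancel₀ hEne
    rw [← hEdef] at hB
    rw [hFE, hB]
  intro m
  have := congrArg (PowerSeries.coeff m) hBF
  rw [PowerSeries.coeff_mk, hF, PowerSeries.coeff_mk] at this
  have hm : (Nat.factorial m : ℚ) ≠ 0 := by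
    exact_mod_cast Nat.factorial_ne_zero m
  field_simp at this
  exact this
end

section
/- For all n ≥ 0 and all x, the Daehee polynomial satisfies D_n(x) = B_n^{(n+2)}(x+1), where B_n^{(α)}(x) is the Bernoulli polynomial of order α. -/
open PowerSeries Finset

noncomputable abbrev Bb : PowerSeries ℚ := bernoulliPowerSeries ℚ

lemma hBX : Bb * (exp ℚ - 1) = X := bernoulliPowerSeries_mul_exp_sub_one ℚ

lemma derivExp : (d⁄dX ℚ) (exp ℚ) = exp ℚ := by
  ext n
  rw [PowerSeries.coeff_derivative, coeff_exp, coeff_exp]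
  have h : ((n+1).factorial : ℚ) = ((n:ℚ)+1) * n.factorial := by
    push_cast [Nat.factorial_succ]; ring
  have h0 : ((n.factorial : ℚ)) ≠ 0 := by exact_mod_cast n.factorial_ne_zero
  have h1 : ((n:ℚ)+1) ≠ 0 := by positivity
  simp only [Algebra.algebraMap_self, RingHom.id_apply, RingHom.id_apply]
  rw [h]
  field_simp

lemma hdB : X * (d⁄dX ℚ) Bb = Bb - X * Bb - Bb ^ 2 := by
  have h := congrArg (d⁄dX ℚ) hBX
  rw [Derivation.leibniz, PowerSeries.derivative_X, map_sub, derivExp,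
      Derivation.map_one_eq_zero, sub_zero, smul_eq_mul, smul_eq_mul] at h
  linear_combination Bb * h - ((d⁄dX ℚ) Bb + Bb) * hBX

lemma hdE (y : ℚ) : (d⁄dX ℚ) (expX y) = C y * expX y := by
  ext n
  rw [PowerSeries.coeff_derivative, PowerSeries.coeff_C_mul]
  simp only [expX, coeff_mk]
  have h : ((n+1).factorial : ℚ) = ((n:ℚ)+1) * n.factorial := by
    push_cast [Nat.factorial_succ]; ring
  have h0 : ((n.factorial : ℚ)) ≠ 0 := by exact_mod_cast n.factorial_ne_zero
  have h1 : ((n:ℚ)+1) ≠ 0 := by positivity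
  rw [h, pow_succ]
  field_simp

lemma keyseries (a : ℕ) (y : ℚ) :
    X * (d⁄dX ℚ) (expX y * Bb ^ (a+1)) =
      C y * (X * (expX y * Bb ^ (a+1))) +
      C ((a:ℚ)+1) * (expX y * Bb ^ (a+1) - X * (expX y * Bb ^ (a+1)) - expX y * Bb ^ (a+2)) := by
  have hC : (C ((a:ℚ)+1)) = ((a:ℚ⟦X⟧)+1) := by
    rw [map_add, map_one, map_natCast]
  rw [Derivation.leibniz, Derivation.leibniz_pow, hdE, Nat.add_sub_cancel, hC,
      smul_eq_mul, smul_eq_mul, smul_eq_mul, nsmul_eq_mul]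
  push_cast
  linear_combination ((a:ℚ⟦X⟧)+1) * expX y * Bb ^ a * hdB

lemma keyrec (a k : ℕ) (y : ℚ) :
    ((k:ℚ)+1) * coeff (k+1) (expX y * Bb^(a+1)) =
      y * coeff k (expX y * Bb^(a+1)) +
      ((a:ℚ)+1) * (coeff (k+1) (expX y * Bb^(a+1)) - coeff k (expX y * Bb^(a+1))
        - coeff (k+1) (expX y * Bb^(a+2))) := by
  have h := congrArg (coeff (k+1)) (keyseries a y)
  simp only [map_add, map_sub, map_one, add_mul, one_mul, coeff_succ_X_mul,
    PowerSeries.coeff_C_mul, PowerSeries.coeff_derivative] at h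
  linear_combination h

lemma hdL : (d⁄dX ℚ) logOneAdd = PowerSeries.mk fun n => (-1:ℚ)^n := by
  ext n
  rw [PowerSeries.coeff_derivative]
  simp only [logOneAdd, coeff_mk, Nat.succ_ne_zero, if_false]
  have h1 : ((n:ℚ)+1) ≠ 0 := by positivity
  push_cast
  rw [pow_succ, pow_succ]
  field_simp

lemma hL' : (1 + X) * (d⁄dX ℚ) logOneAdd = 1 := by
  rw [hdL]
  ext n
  rw [add_mul, one_mul, map_add]
  cases n with
  | zero => simp [coeff_zero_X_mul, coeff_mk]
  | succ k =>
    rw [coeff_succ_X_mul, coeff_mk, coeff_mk, PowerSeries.coeff_one]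
    simp [pow_succ]

lemma hP' (x : ℚ) : (1 + X) * (d⁄dX ℚ) (onePow x) = C x * onePow x := by
  ext n
  rw [add_mul, one_mul, map_add, PowerSeries.coeff_C_mul]
  cases n with
  | zero =>
    rw [coeff_zero_X_mul, PowerSeries.coeff_derivative]
    simp [onePow, coeff_mk, Finset.prod_range_one, Nat.factorial]
  | succ k =>
    rw [coeff_succ_X_mul, PowerSeries.coeff_derivative, PowerSeries.coeff_derivative]
    simp only [onePow, coeff_mk]
    rw [Finset.prod_range_succ]
    have hf2 : ((k+2).factorial : ℚ) = ((k:ℚ)+2) * ((k+1).factorial : ℚ) := by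
      push_cast [Nat.factorial_succ (k+1)]; ring
    have h0 : (((k+1).factorial : ℚ)) ≠ 0 := by exact_mod_cast (k+1).factorial_ne_zero
    have h1 : ((k:ℚ)+2) ≠ 0 := by positivity
    push_cast
    rw [show k+1+1 = k+2 from rfl, hf2]
    field_simp
    ring

lemma coeff_onePow (x : ℚ) (m : ℕ) :
    coeff m (onePow x) = (∏ i ∈ Finset.range m, (x - (i:ℚ)))/(m.factorial : ℚ) := by
  simp [onePow]

lemma dLP (x : ℚ) : (1 + X) * (d⁄dX ℚ) (logOneAdd * onePow x)
    = onePow x + C x * (logOneAdd * onePow x) := by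
  rw [Derivation.leibniz, smul_eq_mul, smul_eq_mul]
  linear_combination logOneAdd * hP' x + onePow x * hL'

lemma dcoeff (x : ℚ) (k : ℕ) :
    ((k:ℚ)+2) * coeff (k+2) (logOneAdd * onePow x) =
      (∏ i ∈ Finset.range (k+1), (x - (i:ℚ)))/((k+1).factorial : ℚ)
      + (x - ((k:ℚ)+1)) * coeff (k+1) (logOneAdd * onePow x) := by
  have h := congrArg (coeff (k+1)) (dLP x)
  simp only [add_mul, one_mul, map_add, coeff_succ_X_mul, PowerSeries.coeff_C_mul,
    PowerSeries.coeff_derivative, coeff_onePow] at h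
  push_cast at h
  linear_combination h

lemma norlund : ∀ (n:ℕ) (x:ℚ), coeff n (expX (x+1) * Bb^(n+1))
    = (∏ i ∈ Finset.range n, (x - (i:ℚ)))/(n.factorial : ℚ) := by
  intro n
  induction n with
  | zero =>
    intro x
    rw [coeff_zero_eq_constantCoeff, map_mul, map_pow]
    simp [expX, bernoulliPowerSeries, constantCoeff_mk, bernoulli_zero, Nat.factorial]
  | succ k ih =>
    intro x
    have h := keyrec k k (x+1)
    rw [ih x] at h
    have hk1 : ((k:ℚ)+1) ≠ 0 := by positivity
    have hfk : ((k.factorial:ℚ)) ≠ 0 := by exact_mod_cast k.factorial_ne_zero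
    have hf : (((k+1).factorial : ℚ)) = ((k:ℚ)+1) * (k.factorial:ℚ) := by
      push_cast [Nat.factorial_succ]; ring
    rw [Finset.prod_range_succ, hf]
    rw [eq_div_iff (mul_ne_zero hk1 hfk)]
    field_simp at h
    linear_combination h

lemma claim2 : ∀ (n:ℕ) (x:ℚ), coeff (n+1) (logOneAdd * onePow x)
    = coeff n (expX (x+1) * Bb^(n+2)) := by
  intro n
  induction n with
  | zero =>
    intro x
    rw [PowerSeries.coeff_mul, Finset.Nat.sum_antidiagonal_eq_sum_range_succ_mk,
      Finset.sum_range_succ, Finset.sum_range_one]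
    rw [coeff_zero_eq_constantCoeff, map_mul, map_pow]
    simp [logOneAdd, onePow, expX, bernoulliPowerSeries, coeff_mk, constantCoeff_mk,
      bernoulli_zero, Nat.factorial, Finset.prod_range_one]
  | succ k ih =>
    intro x
    have hd := dcoeff x k
    have h := keyrec (k+1) k (x+1)
    rw [show k+1+1 = k+2 from rfl, show k+1+2 = k+3 from rfl] at h
    rw [← ih x] at h
    rw [norlund (k+1) x] at h
    have hne : ((k:ℚ)+2) ≠ 0 := by positivity
    apply mul_left_cancel₀ hne
    push_cast at h hd ⊢
    linear_combination hd - h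

theorem daehee_poly_eq_higher_bernoulli (Dp : ℕ → ℚ → ℚ) (OB : ℕ → ℚ → ℕ → ℚ)
    (hDp : ∀ x : ℚ, PowerSeries.mk (fun n => Dp n x / (Nat.factorial n : ℚ)) * PowerSeries.X = logOneAdd * onePow x) (hOB : ∀ (α : ℕ) (x : ℚ), PowerSeries.mk (fun n => OB α x n / (Nat.factorial n : ℚ)) * (PowerSeries.exp ℚ - 1) ^ α = PowerSeries.X ^ α * expX x) :
    ∀ (n : ℕ) (x : ℚ), Dp n x = OB (n + 2) (x + 1) n := by
  intro n x
  have hfne : ((n.factorial:ℚ)) ≠ 0 := by exact_mod_cast n.factorial_ne_zero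
  have h1 := congrArg (coeff (n+1)) (hDp x)
  rw [coeff_succ_mul_X, coeff_mk] at h1
  -- h1 : Dp n x / n! = coeff (n+1) (logOneAdd * onePow x)
  have key : (PowerSeries.mk fun m => OB (n+2) (x+1) m / (Nat.factorial m : ℚ))
      = expX (x+1) * Bb^(n+2) := by
    have h3 : (PowerSeries.mk fun m => OB (n+2) (x+1) m / (Nat.factorial m : ℚ)) * X^(n+2)
        = (expX (x+1) * Bb^(n+2)) * X^(n+2) := by
      have hX : ((exp ℚ - 1) * Bb)^(n+2) = (X:ℚ⟦X⟧)^(n+2) := by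
        rw [mul_comm, hBX]
      calc (PowerSeries.mk fun m => OB (n+2) (x+1) m / (Nat.factorial m : ℚ)) * X^(n+2)
          = (PowerSeries.mk fun m => OB (n+2) (x+1) m / (Nat.factorial m : ℚ))
            * (exp ℚ - 1)^(n+2) * Bb^(n+2) := by rw [mul_assoc, ← mul_pow, hX]
        _ = X^(n+2) * expX (x+1) * Bb^(n+2) := by rw [hOB (n+2) (x+1)]
        _ = (expX (x+1) * Bb^(n+2)) * X^(n+2) := by ring
    exact mul_right_cancel₀ (pow_ne_zero _ PowerSeries.X_ne_zero) h3
  have h4 := congrArg (coeff n) key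
  rw [coeff_mk] at h4
  rw [claim2 n x] at h1
  have h5 : Dp n x / (n.factorial:ℚ) = OB (n+2) (x+1) n / (n.factorial:ℚ) := h1.trans h4.symm
  field_simp at h5
  exact h5
end

section
/- For all n ≥ 0, the Daehee number of the second kind satisfies Ď_n = B_n^{(n+2)}(2), where B_n^{(α)}(x) is the Bernoulli polynomial of order α. -/
open PowerSeries Finset

namespace DaeheeAux

noncomputable def Bps : ℚ⟦X⟧ := bernoulliPowerSeries ℚ
noncomputable def Eps : ℚ⟦X⟧ := PowerSeries.exp ℚ

lemma hBv : Bps * (Eps - 1) = X := bernoulliPowerSeries_mul_exp_sub_one ℚ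

lemma coeff_Eps (n : ℕ) : coeff n Eps = 1 / n.factorial := by
  simp [Eps, PowerSeries.coeff_exp, Algebra.algebraMap_self]

lemma deriv_Eps : d⁄dX ℚ Eps = Eps := by
  ext n
  rw [PowerSeries.coeff_derivative, coeff_Eps, coeff_Eps, Nat.factorial_succ]
  have h1 : ((n.factorial : ℚ)) ≠ 0 := by exact_mod_cast n.factorial_ne_zero
  have h2 : ((n:ℚ)+1) ≠ 0 := by positivity
  push_cast
  field_simp

lemma diamond : X * d⁄dX ℚ Bps + Eps * Bps ^ 2 = Bps := by
  have h := congrArg (d⁄dX ℚ) hBv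
  rw [Derivation.leibniz, derivative_X, map_sub, Derivation.map_one_eq_zero, sub_zero,
    deriv_Eps] at h
  simp only [smul_eq_mul] at h
  linear_combination Bps * h - (d⁄dX ℚ Bps) * hBv

lemma powD (m : ℕ) : X * d⁄dX ℚ (Bps ^ (m+1)) =
    ((m+1 : ℕ) : ℚ⟦X⟧) * (Bps^(m+1) - Eps * Bps^(m+2)) := by
  rw [Derivation.leibniz_pow]
  simp only [Nat.add_sub_cancel, smul_smul, smul_eq_mul, nsmul_eq_mul]
  linear_combination ((m+1 : ℕ) : ℚ⟦X⟧) * Bps^m * diamond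

lemma coeff_natCast_mul (c n : ℕ) (f : ℚ⟦X⟧) :
    coeff n ((c : ℚ⟦X⟧) * f) = (c : ℚ) * coeff n f := by
  rw [← map_natCast (C (R := ℚ)) c, coeff_C_mul]

lemma c_zero (m : ℕ) : coeff (m+1) (Eps * Bps^(m+2)) = 0 := by
  have h := congrArg (coeff (m+1)) (powD m)
  rw [coeff_succ_X_mul, PowerSeries.coeff_derivative, coeff_natCast_mul, map_sub] at h
  have hm : ((m:ℚ)+1) ≠ 0 := by positivity
  have h2 : ((m:ℚ)+1) * coeff (m+1) (Eps * Bps^(m+2)) = 0 := by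
    push_cast at h
    linear_combination h
  exact (mul_eq_zero.mp h2).resolve_left hm

noncomputable def aseq (m : ℕ) : ℚ := coeff m (Eps * Bps^(m+2))

lemma E3 (m : ℕ) : Eps * Eps * Bps^(m+3) = Eps * Bps^(m+3) + X * (Eps * Bps^(m+2)) := by
  linear_combination Eps * Bps^(m+2) * hBv

lemma coeff_E3 (m : ℕ) :
    coeff (m+1) (Eps * Eps * Bps^(m+3)) = aseq (m+1) + aseq m := by
  rw [E3, map_add, coeff_succ_X_mul]
  rfl

lemma E2 (m : ℕ) : X * d⁄dX ℚ (Eps * Bps^(m+2)) =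
    ((m+2 : ℕ) : ℚ⟦X⟧) * (Eps * Bps^(m+2) - Eps * Eps * Bps^(m+3)) + X * (Eps * Bps^(m+2)) := by
  have h1 : d⁄dX ℚ (Eps * Bps^(m+2)) = Eps * d⁄dX ℚ (Bps^(m+2)) + Bps^(m+2) * Eps := by
    rw [Derivation.leibniz, deriv_Eps]; simp only [smul_eq_mul]
  rw [h1]
  linear_combination Eps * powD (m+1)

lemma a_rec (m : ℕ) : aseq (m+1) = aseq m / ((m:ℚ)+2) - aseq m := by
  have h := congrArg (coeff (m+1)) (E2 m)
  rw [coeff_succ_X_mul, PowerSeries.coeff_derivative, c_zero, map_add, coeff_succ_X_mul,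
    coeff_natCast_mul, map_sub, c_zero, coeff_E3] at h
  have hb : (coeff m) (Eps * Bps ^ (m+2)) = aseq m := rfl
  rw [hb] at h
  push_cast at h
  have hm : ((m:ℚ)+2) ≠ 0 := by positivity
  have : ((m:ℚ)+2) * aseq (m+1) = aseq m - ((m:ℚ)+2) * aseq m := by
    linear_combination h
  field_simp
  linear_combination this

lemma constantCoeff_Bps : constantCoeff Bps = 1 := by
  have : coeff 0 Bps = algebraMap ℚ ℚ (bernoulli 0 / (Nat.factorial 0)) := by
    simp [Bps, bernoulliPowerSeries]
  simpa [bernoulli_zero, Algebra.algebraMap_self] using this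

lemma a_zero : aseq 0 = 1 := by
  have : aseq 0 = constantCoeff (Eps * Bps^2) := by rw [aseq, coeff_zero_eq_constantCoeff]
  rw [this, map_mul, map_pow, constantCoeff_Bps]
  simp [Eps]

lemma a_form (m : ℕ) : aseq m = (-1)^m / ((m:ℚ)+1) := by
  induction m with
  | zero => simpa using a_zero
  | succ k ih =>
    rw [a_rec, ih]
    have h1 : ((k:ℚ)+1) ≠ 0 := by positivity
    have h2 : ((k:ℚ)+2) ≠ 0 := by positivity
    push_cast
    rw [pow_succ]
    field_simp
    ring

lemma coeff_log (k : ℕ) :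
    coeff k logOneAdd = if k = 0 then 0 else (-1 : ℚ)^(k+1) / k := by
  simp [logOneAdd]

lemma main (n : ℕ) : coeff n (Eps * Eps * Bps^(n+2)) =
    coeff (n+1) ((1 + X) * logOneAdd) := by
  have hr : coeff (n+1) ((1 + X) * logOneAdd)
      = coeff (n+1) logOneAdd + coeff n logOneAdd := by
    rw [add_mul, one_mul, map_add, coeff_succ_X_mul]
  rw [hr, coeff_log, coeff_log]
  cases n with
  | zero =>
    have : coeff 0 (Eps * Eps * Bps^2) = constantCoeff (Eps * Eps * Bps^2) := by
      rw [coeff_zero_eq_constantCoeff]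
    rw [this, map_mul, map_mul, map_pow, constantCoeff_Bps]
    simp [Eps]
  | succ m =>
    have hL : coeff (m+1) (Eps * Eps * Bps^(m+1+2)) = aseq (m+1) + aseq m := coeff_E3 m
    rw [hL, a_form, a_form]
    have h1 : ((m:ℚ)+1) ≠ 0 := by positivity
    have h2 : ((m:ℚ)+2) ≠ 0 := by positivity
    simp only [Nat.succ_ne_zero, if_neg, Nat.cast_succ]
    push_cast
    rw [pow_succ, pow_succ, pow_succ]
    field_simp
    ring

lemma expX_two : expX 2 = Eps * Eps := by
  have h := exp_mul_exp_eq_exp_add (1:ℚ) 1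
  rw [rescale_one] at h
  norm_num at h
  rw [Eps, h]
  ext n
  rw [expX, coeff_mk, coeff_rescale, PowerSeries.coeff_exp]
  simp [Algebra.algebraMap_self]
  ring

lemma v_ne : (Eps - 1 : ℚ⟦X⟧) ≠ 0 := by
  intro h
  have := congrArg (coeff 1) h
  rw [map_sub, coeff_Eps] at this
  simp at this

end DaeheeAux

open DaeheeAux in
theorem daehee2_eq_higher_bernoulli (Dh : ℕ → ℚ) (OB : ℕ → ℚ → ℕ → ℚ)
    (hDh : PowerSeries.mk (fun n => Dh n / (Nat.factorial n : ℚ)) * PowerSeries.X = (1 + PowerSeries.X) * logOneAdd) (hOB : ∀ (α : ℕ) (x : ℚ), PowerSeries.mk (fun n => OB α x n / (Nat.factorial n : ℚ)) * (PowerSeries.exp ℚ - 1) ^ α = PowerSeries.X ^ α * expX x) :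
    ∀ n : ℕ, Dh n = OB (n + 2) 2 n := by
  intro n
  have hfac : ((n.factorial : ℚ)) ≠ 0 := by exact_mod_cast n.factorial_ne_zero
  -- Dh side
  have hD : Dh n / n.factorial = coeff (n+1) ((1 + X) * logOneAdd) := by
    have := congrArg (coeff (n+1)) hDh
    rwa [coeff_succ_mul_X, coeff_mk] at this
  -- OB side
  have hG : (Bps^(n+2) * expX 2) * (Eps - 1)^(n+2) = X^(n+2) * expX 2 := by
    have hp : Bps^(n+2) * (Eps - 1)^(n+2) = X^(n+2) := by rw [← mul_pow, hBv]
    linear_combination expX 2 * hp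
  have hO : PowerSeries.mk (fun k => OB (n+2) 2 k / (Nat.factorial k : ℚ))
      = Bps^(n+2) * expX 2 := by
    have h1 := (hOB (n+2) 2).trans hG.symm
    exact mul_right_cancel₀ (pow_ne_zero _ v_ne) h1
  have hO2 : OB (n+2) 2 n / n.factorial = coeff n (Bps^(n+2) * expX 2) := by
    have := congrArg (coeff n) hO
    rwa [coeff_mk] at this
  rw [expX_two, mul_comm (Bps^(n+2)) (Eps*Eps)] at hO2
  have hfin : Dh n / n.factorial = OB (n+2) 2 n / n.factorial := by
    rw [hD, hO2, ← main]
  field_simp [hfac] at hfin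
  exact hfin
end

section
/- For all n ≥ 1, (-1)^n D_n/n! = ∑_{m=1}^{n} C(n-1, m-1) Ď_m/m!, where D_n are the Daehee numbers and Ď_m are the Daehee numbers of the second kind. -/
open PowerSeries Finset

lemma coeff_logOneAdd (n : ℕ) :
    PowerSeries.coeff (n+1) logOneAdd = (-1 : ℚ)^n / (n+1) := by
  simp [logOneAdd, pow_succ, pow_succ]

lemma alt_sum (n : ℕ) (hn : 1 ≤ n) :
    ∑ m ∈ Finset.Icc 1 n, (-1 : ℚ)^(m+1) * ((n+1).choose (m+1) : ℚ) = n := by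
  have key : ∑ i ∈ Finset.range (n+2), ((-1 : ℚ)^i * ((n+1).choose i : ℚ)) = 0 := by
    have := Int.alternating_sum_range_choose (n := n+1)
    rw [if_neg (Nat.succ_ne_zero n)] at this
    exact_mod_cast this
  have split : ∑ i ∈ Finset.Ico 0 2, ((-1 : ℚ)^i * ((n+1).choose i : ℚ))
      + ∑ i ∈ Finset.Ico 2 (n+2), ((-1 : ℚ)^i * ((n+1).choose i : ℚ))
      = ∑ i ∈ Finset.Ico 0 (n+2), ((-1 : ℚ)^i * ((n+1).choose i : ℚ)) :=
    Finset.sum_Ico_consecutive _ (by omega) (by omega)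
  rw [Finset.range_eq_Ico] at key
  rw [key] at split
  have h2 : ∑ i ∈ Finset.Ico 0 2, ((-1 : ℚ)^i * ((n+1).choose i : ℚ)) = 1 - (n+1) := by
    norm_num [Finset.sum_Ico_eq_sum_range, Finset.sum_range_succ]
  have hS : ∑ i ∈ Finset.Ico 2 (n+2), ((-1 : ℚ)^i * ((n+1).choose i : ℚ)) = n := by
    linarith [h2, split]
  rw [← hS]
  rw [show Finset.Icc 1 n = Finset.Ico 1 (n+1) by rfl]
  rw [Finset.sum_Ico_eq_sum_range, Finset.sum_Ico_eq_sum_range]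
  apply Finset.sum_congr (by norm_num)
  intro k _
  have : 1 + k + 1 = 2 + k := by omega
  rw [this]

lemma choose_id (n m : ℕ) (hn : 1 ≤ n) (hm : 1 ≤ m) :
    ((n+1).choose (m+1)) * (m+1) * m = (n+1) * n * ((n-1).choose (m-1)) := by
  obtain ⟨n', rfl⟩ : ∃ n', n = n' + 1 := ⟨n - 1, by omega⟩
  obtain ⟨m', rfl⟩ : ∃ m', m = m' + 1 := ⟨m - 1, by omega⟩
  have h1 := Nat.add_one_mul_choose_eq (n'+1) (m'+1)
  have h2 := Nat.add_one_mul_choose_eq n' m'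
  simp only [Nat.add_sub_cancel]
  calc (n'+2).choose (m'+2) * (m'+2) * (m'+1)
      = ((n'+2) * (n'+1).choose (m'+1)) * (m'+1) := by rw [← h1]
    _ = (n'+2) * ((n'+1).choose (m'+1) * (m'+1)) := by ring
    _ = (n'+2) * ((n'+1) * n'.choose m') := by rw [← h2]
    _ = (n'+2) * (n'+1) * n'.choose m' := by ring

theorem daehee_daehee2_relation (D Dh : ℕ → ℚ)
    (hD : PowerSeries.mk (fun n => D n / (Nat.factorial n : ℚ)) * PowerSeries.X = logOneAdd) (hDh : PowerSeries.mk (fun n => Dh n / (Nat.factorial n : ℚ)) * PowerSeries.X = (1 + PowerSeries.X) * logOneAdd) :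
    ∀ n : ℕ, 1 ≤ n →
      (-1 : ℚ) ^ n * D n / (Nat.factorial n : ℚ) =
        ∑ m ∈ Finset.Icc 1 n, ((n - 1).choose (m - 1) : ℚ) * Dh m / (Nat.factorial m : ℚ) := by
  have hDn : ∀ n : ℕ, D n / (Nat.factorial n : ℚ) = (-1 : ℚ)^n / (n+1) := by
    intro n
    have := congrArg (PowerSeries.coeff (n+1)) hD
    rwa [PowerSeries.coeff_succ_mul_X, PowerSeries.coeff_mk, coeff_logOneAdd] at this
  have hDhm : ∀ m : ℕ, 1 ≤ m →
      Dh m / (Nat.factorial m : ℚ) = (-1 : ℚ)^(m+1) / (m * (m+1)) := by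
    intro m hm
    have := congrArg (PowerSeries.coeff (m+1)) hDh
    rw [PowerSeries.coeff_succ_mul_X, PowerSeries.coeff_mk, add_mul, one_mul, map_add,
      coeff_logOneAdd, PowerSeries.coeff_succ_X_mul] at this
    have hcm : PowerSeries.coeff m logOneAdd = (-1 : ℚ)^(m+1) / m := by
      simp only [logOneAdd, PowerSeries.coeff_mk, if_neg (by omega : ¬ m = 0)]
    rw [hcm] at this
    rw [this]
    have hm0 : (m : ℚ) ≠ 0 := Nat.cast_ne_zero.mpr (by omega)
    have hm1 : (m : ℚ) + 1 ≠ 0 := by positivity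
    field_simp
    ring
  intro n hn
  have hn0 : (n : ℚ) ≠ 0 := Nat.cast_ne_zero.mpr (by omega)
  have hn1 : (n : ℚ) + 1 ≠ 0 := by positivity
  have lhs : (-1 : ℚ) ^ n * D n / (Nat.factorial n : ℚ) = 1 / (n+1) := by
    rw [mul_div_assoc, hDn n, ← mul_div_assoc, ← pow_add]
    rw [show n + n = 2 * n by ring, pow_mul]
    norm_num
  rw [lhs]
  have rhs : ∀ m ∈ Finset.Icc 1 n,
      ((n - 1).choose (m - 1) : ℚ) * Dh m / (Nat.factorial m : ℚ)
      = (-1 : ℚ)^(m+1) * ((n+1).choose (m+1) : ℚ) / (n * (n+1)) := by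
    intro m hmem
    rw [Finset.mem_Icc] at hmem
    obtain ⟨hm, hmn⟩ := hmem
    rw [mul_div_assoc, hDhm m hm]
    have hm0 : (m : ℚ) ≠ 0 := Nat.cast_ne_zero.mpr (by omega)
    have hm1 : (m : ℚ) + 1 ≠ 0 := by positivity
    have hc := choose_id n m hn hm
    have hcq : ((n+1).choose (m+1) : ℚ) * ((m : ℚ)+1) * m
        = ((n : ℚ)+1) * n * ((n-1).choose (m-1) : ℚ) := by exact_mod_cast hc
    field_simp
    linear_combination (-1 : ℚ) * hcq
  rw [Finset.sum_congr rfl rhs, ← Finset.sum_div, alt_sum n hn]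
  field_simp
end

section
/- For all n ≥ 1, (-1)^n Ď_n/n! = ∑_{m=1}^{n} C(n-1, m-1) D_m/m!, where D_m are the Daehee numbers and Ď_n are the Daehee numbers of the second kind. -/
open PowerSeries Finset

lemma beta_sum (k : ℕ) : ∀ r : ℕ, 1 ≤ r →
    ∑ j ∈ range (k+1), (k.choose j : ℚ) * (-1)^j / (j + r) =
      (k.factorial : ℚ) * ((r-1).factorial : ℚ) / ((k+r).factorial : ℚ) := by
  induction k with
  | zero =>
    intro r hr
    obtain ⟨t, rfl⟩ := Nat.exists_eq_add_of_le hr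
    have ht : ((t.factorial : ℚ)) ≠ 0 := by exact_mod_cast Nat.factorial_ne_zero _
    have ht1 : ((t:ℚ)+1) ≠ 0 := by positivity
    rw [show 1+t-1 = t from by omega, show (0:ℕ)+(1+t) = t+1 from by omega,
      Nat.factorial_succ, show (0:ℕ)+1 = 1 from rfl, Finset.sum_range_one]
    push_cast
    field_simp
    simp only [Nat.choose_self, Nat.cast_one]
    ring
  | succ k ih =>
    intro r hr
    obtain ⟨t, rfl⟩ := Nat.exists_eq_add_of_le hr
    have ih1 := ih (1+t) (by omega)
    have ih2 := ih (1+(t+1)) (by omega)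
    rw [show 1+t-1 = t from by omega] at ih1
    rw [show 1+(t+1)-1 = t+1 from by omega] at ih2
    push_cast at ih1 ih2 ⊢
    rw [show 1+t-1 = t from by omega]
    have hA : ∑ j ∈ range (k+1+1), ((k+1).choose j : ℚ) * (-1)^j / (j + (1+t)) =
        (∑ i ∈ range (k+1), ((k+1).choose (i+1) : ℚ) * (-1)^(i+1) / ((i+1) + (1+t)))
          + 1/(1+t : ℚ) := by
      rw [Finset.sum_range_succ' (fun j => ((k+1).choose j : ℚ) * (-1)^j / (j + (1+t)))]
      norm_num
    have hB : ∀ i, ((k+1).choose (i+1) : ℚ) = (k.choose i : ℚ) + (k.choose (i+1) : ℚ) := by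
      intro i; rw [Nat.choose_succ_succ]; push_cast; ring
    have hC : ∑ j ∈ range (k+1+1), (k.choose j : ℚ) * (-1)^j / (j + (1+t)) =
        ∑ j ∈ range (k+1), (k.choose j : ℚ) * (-1)^j / (j + (1+t)) := by
      rw [Finset.sum_range_succ, Nat.choose_succ_self]; simp
    have hC' : (∑ i ∈ range (k+1), (k.choose (i+1) : ℚ) * (-1)^(i+1) / ((i+1) + (1+t)))
          + 1/(1+t : ℚ) =
        ∑ j ∈ range (k+1), (k.choose j : ℚ) * (-1)^j / (j + (1+t)) := by
      rw [← hC,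
        Finset.sum_range_succ' (fun j => (k.choose j : ℚ) * (-1)^j / (j + (1+t)))]
      norm_num
    have hD : ∑ i ∈ range (k+1), (k.choose i : ℚ) * (-1)^(i+1) / ((i+1) + (1+t)) =
        -∑ j ∈ range (k+1), (k.choose j : ℚ) * (-1)^j / (j + (1+(t+1))) := by
      rw [← Finset.sum_neg_distrib]
      apply Finset.sum_congr rfl
      intro i _
      push_cast
      ring
    calc ∑ j ∈ range (k+1+1), ((k+1).choose j : ℚ) * (-1)^j / (j + (1+t))
        = (∑ i ∈ range (k+1), (k.choose i : ℚ) * (-1)^(i+1) / ((i+1) + (1+t)))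
          + ((∑ i ∈ range (k+1), (k.choose (i+1) : ℚ) * (-1)^(i+1) / ((i+1) + (1+t)))
          + 1/(1+t : ℚ)) := by
          rw [hA]
          simp only [hB, add_mul, add_div]
          rw [Finset.sum_add_distrib]
          ring
      _ = (-∑ j ∈ range (k+1), (k.choose j : ℚ) * (-1)^j / (j + (1+(t+1))))
          + ∑ j ∈ range (k+1), (k.choose j : ℚ) * (-1)^j / (j + (1+t)) := by
          rw [hC', hD]
      _ = ((k+1).factorial : ℚ) * ((t).factorial : ℚ) / ((k+1+(1+t)).factorial : ℚ) := by
          rw [ih1, ih2]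
          have e3 : k+(1+(t+1)) = (k+(1+t))+1 := by omega
          have e4 : k+1+(1+t) = (k+(1+t))+1 := by omega
          rw [e3, e4, Nat.factorial_succ (k+(1+t)), Nat.factorial_succ t,
            Nat.factorial_succ k]
          have h0 : ((k+(1+t)).factorial : ℚ) ≠ 0 := by
            exact_mod_cast Nat.factorial_ne_zero _
          have h1 : ((k+(1+t)+1 : ℕ) : ℚ) ≠ 0 := by positivity
          have h2 : ((t.factorial : ℚ)) ≠ 0 := by exact_mod_cast Nat.factorial_ne_zero _
          push_cast at h1 ⊢
          field_simp
          ring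

theorem daehee2_daehee_relation (D Dh : ℕ → ℚ)
    (hD : PowerSeries.mk (fun n => D n / (Nat.factorial n : ℚ)) * PowerSeries.X = logOneAdd) (hDh : PowerSeries.mk (fun n => Dh n / (Nat.factorial n : ℚ)) * PowerSeries.X = (1 + PowerSeries.X) * logOneAdd) :
    ∀ n : ℕ, 1 ≤ n →
      (-1 : ℚ) ^ n * Dh n / (Nat.factorial n : ℚ) =
        ∑ m ∈ Finset.Icc 1 n, ((n - 1).choose (m - 1) : ℚ) * D m / (Nat.factorial m : ℚ) := by
  have hDm : ∀ m : ℕ, D m / (Nat.factorial m : ℚ) = (-1)^m / (m+1) := by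
    intro m
    have h := congrArg (coeff (m+1)) hD
    rw [coeff_succ_mul_X, coeff_mk] at h
    rw [h]
    unfold logOneAdd
    rw [coeff_mk]
    simp only [Nat.succ_ne_zero, if_false]
    push_cast
    rw [pow_succ, pow_succ]
    ring
  intro n hn
  obtain ⟨k, rfl⟩ : ∃ k, n = k + 1 := ⟨n - 1, by omega⟩
  have hDhn : Dh (k+1) / (Nat.factorial (k+1) : ℚ) = (-1)^(k+1) / (k+2) + (-1)^k / (k+1) := by
    have h := congrArg (coeff (k+2)) hDh
    rw [coeff_succ_mul_X, coeff_mk, add_mul, one_mul, map_add, coeff_succ_X_mul] at h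
    rw [h]
    unfold logOneAdd
    rw [coeff_mk, coeff_mk]
    simp only [Nat.succ_ne_zero, if_false]
    push_cast
    rw [pow_succ, pow_succ, pow_succ]
    ring
  have hRHS : ∑ m ∈ Finset.Icc 1 (k+1), (((k+1) - 1).choose (m - 1) : ℚ) * D m / (Nat.factorial m : ℚ)
      = ∑ i ∈ range (k+1), (k.choose i : ℚ) * ((-1)^(1+i) / (1+i+1)) := by
    rw [← Finset.Ico_add_one_right_eq_Icc, Finset.sum_Ico_eq_sum_range]
    simp only [Nat.add_sub_cancel, Nat.succ_sub_one]
    apply Finset.sum_congr rfl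
    intro i _
    rw [show 1+i-1 = i from by omega, mul_div_assoc, hDm (1+i)]
    push_cast
    ring
  rw [hRHS]
  have hsum : ∑ i ∈ range (k+1), (k.choose i : ℚ) * ((-1)^(1+i) / (1+i+1))
      = -∑ j ∈ range (k+1), (k.choose j : ℚ) * (-1)^j / (j + (2:ℕ)) := by
    rw [← Finset.sum_neg_distrib]
    apply Finset.sum_congr rfl
    intro i _
    rw [show 1+i = i+1 from by omega, pow_succ]
    push_cast
    ring
  rw [hsum, beta_sum k 2 (by omega)]
  rw [mul_div_assoc, hDhn]
  have hs1 : (-1:ℚ)^(k+1) * (-1)^(k+1) = 1 := by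
    rw [← pow_add]; exact Even.neg_one_pow ⟨k+1, by ring⟩
  have hs2 : (-1:ℚ)^(k+1) * (-1)^k = -1 := by
    rw [← pow_add]; exact Odd.neg_one_pow ⟨k, by ring⟩
  rw [mul_add, ← mul_div_assoc, ← mul_div_assoc, hs1, hs2]
  have h0 : (((k+2).factorial : ℕ) : ℚ) = ((k:ℚ)+2)*(((k:ℚ)+1)*(k.factorial : ℚ)) := by
    rw [show k+2 = (k+1)+1 from rfl, Nat.factorial_succ, Nat.factorial_succ]
    push_cast; ring
  have hk : (k.factorial : ℚ) ≠ 0 := by exact_mod_cast Nat.factorial_ne_zero _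
  have h1 : ((k:ℚ)+1) ≠ 0 := by positivity
  have h2 : ((k:ℚ)+2) ≠ 0 := by positivity
  rw [show k + (2:ℕ) = k + 2 from rfl, show (2:ℕ)-1 = 1 from rfl, h0]
  simp only [Nat.factorial_one, Nat.cast_one, mul_one]
  push_cast
  field_simp
  ring
end
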